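/- Let n > 1 and let A be an n-dimensional evolution algebra over a field K whose annihilator has dimension n − 1. Then A is isomorphic to the evolution algebra E_1 with natural basis {e_1,…,e_n} and products e_1e_1 = e_1 and e_ie_j = 0 otherwise, or to the evolution algebra E_4 with natural basis {e_1,…,e_n} and products e_1e_1 = e_2 and e_ie_j = 0 otherwise. -/

import Mathlib

open scoped BigOperators

noncomputable section

/-- The product in the `n`-dimensional evolution algebra over `K` (on the model space
`Fin n → K`, whose standard basis is the natural basis) with structure constants `t`,
so that `eᵢ * eᵢ = ∑ⱼ t i j • eⱼ` and `eᵢ * eⱼ = 0` for `i ≠ j`. -/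
def evolMul {K : Type*} [Field K] {n : ℕ} (t : Fin n → Fin n → K)
    (x y : Fin n → K) : Fin n → K :=
  fun k => ∑ i, x i * y i * t i k

lemma evolMul_add_left {K : Type*} [Field K] {n : ℕ} (t : Fin n → Fin n → K)
    (a b v : Fin n → K) : evolMul t (a + b) v = evolMul t a v + evolMul t b v := by
  funext k
  simp [evolMul, add_mul, Finset.sum_add_distrib]

lemma evolMul_add_right {K : Type*} [Field K] {n : ℕ} (t : Fin n → Fin n → K)
    (v a b : Fin n → K) : evolMul t v (a + b) = evolMul t v a + evolMul t v b := by
  funext k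
  simp [evolMul, mul_add, add_mul, Finset.sum_add_distrib]

lemma evolMul_smul_left {K : Type*} [Field K] {n : ℕ} (t : Fin n → Fin n → K)
    (c : K) (a v : Fin n → K) : evolMul t (c • a) v = c • evolMul t a v := by
  funext k
  simp [evolMul, Finset.mul_sum, mul_assoc]

lemma evolMul_smul_right {K : Type*} [Field K] {n : ℕ} (t : Fin n → Fin n → K)
    (c : K) (v a : Fin n → K) : evolMul t v (c • a) = c • evolMul t v a := by
  funext k
  simp [evolMul, Finset.mul_sum]
  ring_nf
  apply Finset.sum_congr rfl
  intro i _
  ring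

/-- The annihilator of the evolution algebra with structure constants `t`. -/
def evolAnn {K : Type*} [Field K] {n : ℕ} (t : Fin n → Fin n → K) :
    Submodule K (Fin n → K) where
  carrier := {u | ∀ v, evolMul t u v = 0 ∧ evolMul t v u = 0}
  zero_mem' := by
    intro v
    constructor <;> · funext k; simp [evolMul]
  add_mem' := by
    intro a b ha hb v
    exact ⟨by rw [evolMul_add_left, (ha v).1, (hb v).1, add_zero],
           by rw [evolMul_add_right, (ha v).2, (hb v).2, add_zero]⟩
  smul_mem' := by
    intro c a ha v
    exact ⟨by rw [evolMul_smul_left, (ha v).1, smul_zero],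
           by rw [evolMul_smul_right, (ha v).2, smul_zero]⟩

/-- The derived algebra (span of all products). -/
def evolDerived {K : Type*} [Field K] {n : ℕ} (t : Fin n → Fin n → K) :
    Submodule K (Fin n → K) :=
  Submodule.span K {w | ∃ u v, evolMul t u v = w}

/-- Two evolution algebras (given by structure constants) are isomorphic. -/
def EvolIsom {K : Type*} [Field K] {n : ℕ} (t t' : Fin n → Fin n → K) : Prop :=
  ∃ f : (Fin n → K) ≃ₗ[K] (Fin n → K),
    ∀ u v, evolMul t' (f u) (f v) = f (evolMul t u v)

/-- Two evolution algebras (given by structure constants) are isotopic. -/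
def EvolIsotopic {K : Type*} [Field K] {n : ℕ} (t t' : Fin n → Fin n → K) : Prop :=
  ∃ f g h : (Fin n → K) ≃ₗ[K] (Fin n → K),
    ∀ u v, evolMul t' (f u) (g v) = h (evolMul t u v)

/-- Two evolution algebras (given by structure constants) are strongly isotopic. -/
def EvolStrongIsotopic {K : Type*} [Field K] {n : ℕ} (t t' : Fin n → Fin n → K) : Prop :=
  ∃ f h : (Fin n → K) ≃ₗ[K] (Fin n → K),
    ∀ u v, evolMul t' (f u) (f v) = h (evolMul t u v)

lemma evol_case_E1 {K : Type*} [Field K] {n : ℕ} (hn : 1 < n)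
    (t : Fin n → Fin n → K) (i0 : Fin n)
    (hprod : ∀ u v : Fin n → K, evolMul t u v = (u i0 * v i0) • t i0)
    (hc : t i0 i0 ≠ 0) :
    EvolIsom t (fun i j : Fin n => if (i : ℕ) = 0 ∧ (j : ℕ) = 0 then (1 : K) else 0) := by
  classical
  set z0 : Fin n := ⟨0, by omega⟩ with hz0def
  set σ : Equiv.Perm (Fin n) := Equiv.swap z0 i0 with hσdef
  have hσ0 : σ z0 = i0 := Equiv.swap_apply_left _ _
  have hσi : σ i0 = z0 := Equiv.swap_apply_right _ _
  have hσσ : ∀ k, σ (σ k) = k := fun k => Equiv.swap_apply_self _ _ k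
  have hne : ∀ j : Fin n, j ≠ i0 → σ j ≠ z0 := by
    intro j hj h
    exact hj (σ.injective (by rw [h, hσi]))
  have hne' : ∀ k : Fin n, k ≠ z0 → σ k ≠ i0 := by
    intro k hk h
    exact hk (σ.injective (by rw [h, hσ0]))
  set F : (Fin n → K) → (Fin n → K) := fun u k => if k = z0 then t i0 i0 * u i0
      else u (σ k) - (t i0 i0)⁻¹ * t i0 (σ k) * u i0 with hF
  set G : (Fin n → K) → (Fin n → K) := fun v j => if j = i0 then (t i0 i0)⁻¹ * v z0
      else v (σ j) + (t i0 i0)⁻¹ * (t i0 i0)⁻¹ * t i0 j * v z0 with hG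
  have hFz : ∀ u, F u z0 = t i0 i0 * u i0 := fun u => if_pos rfl
  have hFk : ∀ u k, k ≠ z0 → F u k = u (σ k) - (t i0 i0)⁻¹ * t i0 (σ k) * u i0 :=
    fun u k hk => if_neg hk
  have hGi : ∀ v, G v i0 = (t i0 i0)⁻¹ * v z0 := fun v => if_pos rfl
  have hGj : ∀ v j, j ≠ i0 → G v j = v (σ j) + (t i0 i0)⁻¹ * (t i0 i0)⁻¹ * t i0 j * v z0 :=
    fun v j hj => if_neg hj
  refine ⟨{ toFun := F
            map_add' := by
              intro a b
              show F (a + b) = F a + F b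
              funext k; rw [Pi.add_apply]; by_cases h : k = z0
              · subst h; rw [hFz, hFz, hFz, Pi.add_apply]; ring
              · rw [hFk _ _ h, hFk _ _ h, hFk _ _ h, Pi.add_apply, Pi.add_apply]; ring
            map_smul' := by
              intro m a
              show F (m • a) = m • F a
              funext k; rw [Pi.smul_apply, smul_eq_mul]; by_cases h : k = z0
              · subst h; rw [hFz, hFz, Pi.smul_apply, smul_eq_mul]; ring
              · rw [hFk _ _ h, hFk _ _ h, Pi.smul_apply, Pi.smul_apply,
                  smul_eq_mul, smul_eq_mul]; ring
            invFun := G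
            left_inv := ?_
            right_inv := ?_ }, ?_⟩
  · intro u
    show G (F u) = u
    funext j
    by_cases hj : j = i0
    · subst hj; rw [hGi, hFz, inv_mul_cancel_left₀ hc]
    · rw [hGj _ _ hj, hFk _ _ (hne j hj), hFz, hσσ]
      field_simp
      ring
  · intro v
    show F (G v) = v
    funext k
    by_cases hk : k = z0
    · subst hk; rw [hFz, hGi, mul_inv_cancel_left₀ hc]
    · rw [hFk _ _ hk, hGj _ _ (hne' k hk), hGi, hσσ]
      ring
  · intro u v
    rw [hprod]
    funext k
    show (∑ i, F u i * F v i * (if (i : ℕ) = 0 ∧ (k : ℕ) = 0 then (1:K) else 0))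
        = F ((u i0 * v i0) • t i0) k
    rw [Finset.sum_eq_single z0]
    · by_cases hk : k = z0
      · subst hk; rw [hFz, hFz, hFz, Pi.smul_apply, smul_eq_mul]
        have : ((z0 : ℕ) = 0 ∧ (z0 : ℕ) = 0) := ⟨rfl, rfl⟩
        rw [if_pos this]
        ring
      · have hkv : (k : ℕ) ≠ 0 := fun h => hk (Fin.ext h)
        rw [hFz, hFz, hFk _ _ hk, Pi.smul_apply, Pi.smul_apply, smul_eq_mul, smul_eq_mul,
          if_neg (by exact fun h => hkv h.2), mul_zero]
        field_simp
        ring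
    · intro b _ hb
      have hbv : (b : ℕ) ≠ 0 := fun h => hb (Fin.ext h)
      rw [if_neg (by exact fun h => hbv h.1), mul_zero]
    · intro h; exact absurd (Finset.mem_univ _) h

lemma evol_case_E4 {K : Type*} [Field K] {n : ℕ} (hn : 1 < n)
    (t : Fin n → Fin n → K) (i0 j0 : Fin n)
    (hprod : ∀ u v : Fin n → K, evolMul t u v = (u i0 * v i0) • t i0)
    (hc : t i0 i0 = 0) (hd : t i0 j0 ≠ 0) :
    EvolIsom t (fun i j : Fin n => if (i : ℕ) = 0 ∧ (j : ℕ) = 1 then (1 : K) else 0) := by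
  classical
  set z0 : Fin n := ⟨0, by omega⟩ with hz0def
  set z1 : Fin n := ⟨1, hn⟩ with hz1def
  have hz01 : z0 ≠ z1 := by
    intro h
    exact absurd (congrArg Fin.val h) (by norm_num)
  have hij : j0 ≠ i0 := by rintro rfl; exact hd hc
  set σ1 : Equiv.Perm (Fin n) := Equiv.swap z0 i0 with hσ1def
  have hσ1σ1 : ∀ k, σ1 (σ1 k) = k := fun k => Equiv.swap_apply_self _ _ k
  set m : Fin n := σ1 j0 with hmdef
  have hm0 : m ≠ z0 := by
    intro h
    apply hij
    have h2 : σ1 m = σ1 z0 := by rw [h]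
    rw [hmdef, hσ1σ1, Equiv.swap_apply_left] at h2
    exact h2
  set τ : Equiv.Perm (Fin n) := (Equiv.swap z1 m).trans σ1 with hτdef
  have hτ0 : τ z0 = i0 := by
    show σ1 (Equiv.swap z1 m z0) = i0
    rw [Equiv.swap_apply_of_ne_of_ne hz01 (Ne.symm hm0)]
    exact Equiv.swap_apply_left _ _
  have hτ1 : τ z1 = j0 := by
    show σ1 (Equiv.swap z1 m z1) = j0
    rw [Equiv.swap_apply_left, hmdef, hσ1σ1]
  have hki : ∀ k, k ≠ z0 → τ k ≠ i0 := fun k hk h => hk (τ.injective (by rw [h, hτ0]))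
  have hkj : ∀ k, k ≠ z1 → τ k ≠ j0 := fun k hk h => hk (τ.injective (by rw [h, hτ1]))
  have hji0 : ∀ j, j ≠ i0 → τ.symm j ≠ z0 := by
    intro j hj h
    exact hj (by rw [← τ.apply_symm_apply j, h, hτ0])
  have hji1 : ∀ j, j ≠ j0 → τ.symm j ≠ z1 := by
    intro j hj h
    exact hj (by rw [← τ.apply_symm_apply j, h, hτ1])
  set F : (Fin n → K) → (Fin n → K) := fun u k =>
      if k = z0 then u i0 else if k = z1 then (t i0 j0)⁻¹ * u j0
      else u (τ k) - (t i0 j0)⁻¹ * t i0 (τ k) * u j0 with hF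
  set G : (Fin n → K) → (Fin n → K) := fun v j =>
      if j = i0 then v z0 else if j = j0 then t i0 j0 * v z1
      else v (τ.symm j) + t i0 j * v z1 with hG
  have hFz0 : ∀ u, F u z0 = u i0 := fun u => if_pos rfl
  have hFz1 : ∀ u, F u z1 = (t i0 j0)⁻¹ * u j0 := fun u => by
    simp [hF, Ne.symm hz01]
  have hFk : ∀ u k, k ≠ z0 → k ≠ z1 →
      F u k = u (τ k) - (t i0 j0)⁻¹ * t i0 (τ k) * u j0 := fun u k h1 h2 => by
    simp [hF, h1, h2]
  have hGi : ∀ v, G v i0 = v z0 := fun v => if_pos rfl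
  have hGj : ∀ v, G v j0 = t i0 j0 * v z1 := fun v => by
    simp [hG, hij]
  have hGk : ∀ v j, j ≠ i0 → j ≠ j0 → G v j = v (τ.symm j) + t i0 j * v z1 :=
    fun v j h1 h2 => by
    simp [hG, h1, h2]
  refine ⟨{ toFun := F
            map_add' := by
              intro a b
              show F (a + b) = F a + F b
              funext k; rw [Pi.add_apply]
              by_cases h1 : k = z0
              · subst h1; rw [hFz0, hFz0, hFz0, Pi.add_apply]
              · by_cases h2 : k = z1
                · subst h2; rw [hFz1, hFz1, hFz1, Pi.add_apply]; ring
                · rw [hFk _ _ h1 h2, hFk _ _ h1 h2, hFk _ _ h1 h2,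
                    Pi.add_apply, Pi.add_apply]; ring
            map_smul' := by
              intro c a
              show F (c • a) = c • F a
              funext k; rw [Pi.smul_apply, smul_eq_mul]
              by_cases h1 : k = z0
              · subst h1; rw [hFz0, hFz0, Pi.smul_apply, smul_eq_mul]
              · by_cases h2 : k = z1
                · subst h2; rw [hFz1, hFz1, Pi.smul_apply, smul_eq_mul]; ring
                · rw [hFk _ _ h1 h2, hFk _ _ h1 h2, Pi.smul_apply, Pi.smul_apply,
                    smul_eq_mul, smul_eq_mul]; ring
            invFun := G
            left_inv := ?_
            right_inv := ?_ }, ?_⟩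
  · intro u
    show G (F u) = u
    funext j
    by_cases h1 : j = i0
    · subst h1; rw [hGi, hFz0]
    · by_cases h2 : j = j0
      · subst h2; rw [hGj, hFz1, mul_inv_cancel_left₀ hd]
      · rw [hGk _ _ h1 h2, hFk _ _ (hji0 j h1) (hji1 j h2), hFz1,
          τ.apply_symm_apply]
        field_simp
        ring
  · intro v
    show F (G v) = v
    funext k
    by_cases h1 : k = z0
    · subst h1; rw [hFz0, hGi]
    · by_cases h2 : k = z1
      · subst h2; rw [hFz1, hGj, inv_mul_cancel_left₀ hd]
      · rw [hFk _ _ h1 h2, hGk _ _ (hki k h1) (hkj k h2), hGj,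
          τ.symm_apply_apply]
        field_simp
        ring
  · intro u v
    rw [hprod]
    funext k
    show (∑ i, F u i * F v i * (if (i : ℕ) = 0 ∧ (k : ℕ) = 1 then (1:K) else 0))
        = F ((u i0 * v i0) • t i0) k
    rw [Finset.sum_eq_single z0]
    · by_cases h1 : k = z0
      · subst h1
        rw [hFz0, hFz0, hFz0, Pi.smul_apply, smul_eq_mul, hc, mul_zero,
          if_neg (by norm_num), mul_zero]
      · by_cases h2 : k = z1
        · subst h2
          rw [hFz0, hFz0, hFz1, Pi.smul_apply, smul_eq_mul,
            if_pos ⟨rfl, rfl⟩, mul_one]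
          field_simp
        · have hkv : (k : ℕ) ≠ 1 := fun h => h2 (Fin.ext h)
          rw [hFz0, hFz0, hFk _ _ h1 h2, Pi.smul_apply, Pi.smul_apply,
            smul_eq_mul, smul_eq_mul, if_neg (by exact fun h => hkv h.2), mul_zero]
          field_simp
          ring
    · intro b _ hb
      have hbv : (b : ℕ) ≠ 0 := fun h => hb (Fin.ext h)
      rw [if_neg (by exact fun h => hbv h.1), mul_zero]
    · intro h; exact absurd (Finset.mem_univ _) h

/-
STATEMENT 6: Let n > 1 and let A be an n-dimensional evolution algebra over K whose
annihilator has dimension n − 1.  Then A is isomorphic to E₁ (e₁e₁ = e₁, all other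
natural-basis products zero) or to E₄ (e₁e₁ = e₂, all other natural-basis products
zero).  (0-based indices: e₁, e₂ are the basis vectors with indices 0, 1.)
-/
theorem isom_E1_or_E4_of_annihilator_codim_one
    {K : Type*} [Field K] {n : ℕ} (hn : 1 < n) (t : Fin n → Fin n → K)
    (hann : Module.finrank K (evolAnn t) = n - 1) :
    EvolIsom t (fun i j : Fin n => if (i : ℕ) = 0 ∧ (j : ℕ) = 0 then (1 : K) else 0) ∨
    EvolIsom t (fun i j : Fin n => if (i : ℕ) = 0 ∧ (j : ℕ) = 1 then (1 : K) else 0) := by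
  classical
  have hmem : ∀ u : Fin n → K, u ∈ evolAnn t ↔ ∀ i, t i ≠ 0 → u i = 0 := by
    intro u
    constructor
    · intro hu i hti
      obtain ⟨k, hk⟩ : ∃ k, t i k ≠ 0 := by
        by_contra h
        push_neg at h
        exact hti (funext h)
      have h1 := congrFun (hu (Pi.single i 1)).1 k
      have h2 : (∑ i', u i' * (Pi.single i (1:K) : Fin n → K) i' * t i' k) = u i * t i k := by
        rw [Finset.sum_eq_single i]
        · rw [Pi.single_eq_same, mul_one]
        · intro b _ hb
          rw [Pi.single_eq_of_ne hb, mul_zero, zero_mul]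
        · intro h; exact absurd (Finset.mem_univ _) h
      rw [show evolMul t u (Pi.single i 1) k
            = ∑ i', u i' * (Pi.single i (1:K) : Fin n → K) i' * t i' k
          from rfl, h2, Pi.zero_apply] at h1
      exact (mul_eq_zero.mp h1).resolve_right hk
    · intro h
      intro v
      constructor <;> (funext k; rw [Pi.zero_apply]; apply Finset.sum_eq_zero; intro i _)
      · by_cases hti : t i = 0
        · rw [hti, Pi.zero_apply, mul_zero]
        · rw [h i hti, zero_mul, zero_mul]
      · by_cases hti : t i = 0
        · rw [hti, Pi.zero_apply, mul_zero]
        · rw [h i hti, mul_zero, zero_mul]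
  set Φ : (Fin n → K) →ₗ[K] ({i : Fin n // t i ≠ 0} → K) :=
    LinearMap.pi (fun i => LinearMap.proj i.1) with hΦ
  have hΦap : ∀ (u : Fin n → K) (i : {i : Fin n // t i ≠ 0}), Φ u i = u i.1 := fun u i => rfl
  have hker : LinearMap.ker Φ = evolAnn t := by
    ext u
    rw [LinearMap.mem_ker, hmem]
    constructor
    · intro h i hti
      have := congrFun h ⟨i, hti⟩
      rwa [hΦap, Pi.zero_apply] at this
    · intro h
      funext i
      rw [hΦap, Pi.zero_apply]
      exact h i.1 i.2
  have hsurj : Function.Surjective Φ := by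
    intro g
    refine ⟨fun j => if h : t j ≠ 0 then g ⟨j, h⟩ else 0, ?_⟩
    funext i
    rw [hΦap, dif_pos i.2]
  have hcard : Fintype.card {i : Fin n // t i ≠ 0} = 1 := by
    have h1 := LinearMap.finrank_range_add_finrank_ker Φ
    rw [LinearMap.range_eq_top.mpr hsurj, finrank_top, hker, hann,
      Module.finrank_fintype_fun_eq_card, Module.finrank_fin_fun] at h1
    omega
  obtain ⟨⟨i0, ht0⟩, huniq⟩ := Fintype.card_eq_one_iff.mp hcard
  have huniq' : ∀ i, t i ≠ 0 → i = i0 := fun i hi =>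
    congrArg Subtype.val (huniq ⟨i, hi⟩)
  have hprod : ∀ u v : Fin n → K, evolMul t u v = (u i0 * v i0) • t i0 := by
    intro u v
    funext k
    rw [show evolMul t u v k = ∑ i, u i * v i * t i k from rfl,
      Pi.smul_apply, smul_eq_mul, Finset.sum_eq_single i0]
    · intro b _ hb
      have htb : t b = 0 := by
        by_contra h
        exact hb (huniq' b h)
      rw [htb, Pi.zero_apply, mul_zero]
    · intro h; exact absurd (Finset.mem_univ _) h
  by_cases hc : t i0 i0 = 0
  · obtain ⟨j0, hd⟩ : ∃ j0, t i0 j0 ≠ 0 := by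
      by_contra h
      push_neg at h
      exact ht0 (funext h)
    exact Or.inr (evol_case_E4 hn t i0 j0 hprod hc hd)
  · exact Or.inl (evol_case_E1 hn t i0 hprod hc)
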